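/- Let A and B be positive self-adjoint (bounded) operators on a Hilbert space with A ≤ B in the operator order. Then for every α with 0 ≤ α ≤ 1, one has A^α ≤ B^α. -/

import Mathlib

open MeasureTheory Set Real
open scoped InnerProductSpace NNReal

set_option maxHeartbeats 2000000
set_option synthInstance.maxHeartbeats 1000000

namespace LoewnerHeinzAux

/-! ### Scalar facts -/

noncomputable def lhI (α : ℝ) : ℝ := ∫ l in Ioi (0:ℝ), l ^ (α - 1) / (1 + l)

theorem lhI_integrable {α : ℝ} (h0 : 0 < α) (h1 : α < 1) :
    IntegrableOn (fun l : ℝ => l ^ (α - 1) / (1 + l)) (Ioi 0) := by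
  have hmeas : AEStronglyMeasurable (fun l : ℝ => l ^ (α - 1) / (1 + l))
      (volume.restrict (Ioi (0:ℝ))) := by
    apply ContinuousOn.aestronglyMeasurable _ measurableSet_Ioi
    intro x hx
    have hx0 : 0 < x := hx
    exact ((continuousAt_rpow_const x _ (Or.inl hx0.ne')).continuousWithinAt.div
      ((continuous_const.add continuous_id).continuousWithinAt) (by positivity))
  rw [← Ioc_union_Ioi_eq_Ioi (zero_le_one)]
  apply IntegrableOn.union
  · have hint : IntegrableOn (fun l : ℝ => l ^ (α - 1)) (Ioc (0:ℝ) 1) := by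
      rw [← intervalIntegrable_iff_integrableOn_Ioc_of_le zero_le_one]
      apply intervalIntegral.intervalIntegrable_rpow'
      linarith
    refine (hint.mono' (hmeas.mono_measure (Measure.restrict_mono Ioc_subset_Ioi_self le_rfl)) ?_)
    filter_upwards [ae_restrict_mem measurableSet_Ioc] with x hx
    have hx0 : 0 < x := hx.1
    rw [Real.norm_eq_abs, abs_div, abs_of_nonneg (rpow_nonneg hx0.le _), abs_of_pos (by linarith),
      div_le_iff₀ (by linarith)]
    nlinarith [rpow_nonneg hx0.le (α - 1)]
  · have hint : IntegrableOn (fun l : ℝ => l ^ (α - 2)) (Ioi (1:ℝ)) :=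
      integrableOn_Ioi_rpow_of_lt (by linarith) one_pos
    refine hint.mono' (hmeas.mono_measure (Measure.restrict_mono (Ioi_subset_Ioi zero_le_one) le_rfl)) ?_
    filter_upwards [ae_restrict_mem measurableSet_Ioi] with x hx
    have hx1 : 1 < x := hx
    have hx0 : 0 < x := by linarith
    rw [Real.norm_eq_abs, abs_div, abs_of_nonneg (rpow_nonneg hx0.le _), abs_of_pos (by linarith),
      div_le_iff₀ (by linarith)]
    calc x ^ (α - 1) = x ^ (α - 2) * x := by
          rw [← rpow_add_one hx0.ne']; ring_nf
      _ ≤ x ^ (α - 2) * (1 + x) := by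
          have := rpow_nonneg hx0.le (α - 2); nlinarith

theorem lhI_pos {α : ℝ} (h0 : 0 < α) (h1 : α < 1) : 0 < lhI α := by
  rw [lhI]
  have hf : 0 ≤ᶠ[ae (volume.restrict (Ioi (0:ℝ)))] fun x : ℝ => x ^ (α - 1) / (1 + x) := by
    filter_upwards [ae_restrict_mem measurableSet_Ioi] with x hx
    have hx0 : 0 < x := hx
    positivity
  refine (setIntegral_pos_iff_support_of_nonneg_ae hf (lhI_integrable h0 h1)).2 ?_
  have hsub : Ioi (0:ℝ) ⊆ Function.support fun l : ℝ => l ^ (α - 1) / (1 + l) := by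
    intro x hx
    have hx0 : 0 < x := hx
    have : 0 < x ^ (α - 1) / (1 + x) := by positivity
    exact this.ne'
  rw [inter_eq_right.mpr hsub]
  simp [Real.volume_Ioi]

theorem lh_scalar {α : ℝ} (h0 : 0 < α) (t : ℝ) (ht : 0 ≤ t) :
    ∫ l in Ioi (0:ℝ), l ^ (α - 1) * (t / (t + l)) = lhI α * t ^ α := by
  rcases eq_or_lt_of_le ht with rfl | ht0
  · simp [Real.zero_rpow h0.ne']
  · have key : ∀ x ∈ Ioi (0:ℝ), (fun l : ℝ => l ^ (α - 1) * (t / (t + l))) (t * x)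
        = t ^ (α - 1) * (x ^ (α - 1) / (1 + x)) := by
      intro x hx
      have hx0 : 0 < x := hx
      simp only
      rw [Real.mul_rpow ht0.le hx0.le]
      rw [show t + t * x = t * (1 + x) by ring, div_mul_eq_div_div]
      rw [div_self ht0.ne']
      ring
    have h := integral_comp_mul_left_Ioi (fun l : ℝ => l ^ (α - 1) * (t / (t + l))) 0 ht0
    rw [mul_zero] at h
    rw [setIntegral_congr_fun measurableSet_Ioi key] at h
    rw [MeasureTheory.integral_const_mul] at h
    have h' := h.symm
    rw [smul_eq_mul] at h'
    have h2 : ∫ l in Ioi (0:ℝ), l ^ (α - 1) * (t / (t + l))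
        = t * (t ^ (α - 1) * lhI α) := by
      rw [← lhI] at h'
      field_simp at h' ⊢
      linarith [h']
    have h3 : t * t ^ (α - 1) = t ^ α := by
      rw [← Real.rpow_one_add' ht0.le (by intro hc; linarith : (1:ℝ) + (α - 1) ≠ 0)]
      norm_num
    rw [h2, show t * (t ^ (α - 1) * lhI α) = t * t ^ (α - 1) * lhI α from by ring, h3]
    ring

/-! ### Operator facts -/

variable {H : Type*} [NormedAddCommGroup H] [InnerProductSpace ℂ H] [CompleteSpace H]

theorem lh_smul_nonneg (c : ℝ) (hc : 0 ≤ c) {x : H →L[ℂ] H} (hx : 0 ≤ x) : 0 ≤ c • x := by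
  set s := cfc Real.sqrt x with hs
  have hsa : IsSelfAdjoint x := .of_nonneg hx
  have h2 : star s = s := cfc_predicate Real.sqrt x
  have h1 : x = s * s := by
    rw [hs, ← cfc_mul _ _ x (by fun_prop) (by fun_prop)]
    conv_lhs => rw [← cfc_id ℝ x hsa]
    exact cfc_congr fun t ht => (Real.mul_self_sqrt (spectrum_nonneg_of_nonneg hx ht)).symm
  have : c • x = star (Real.sqrt c • s) * (Real.sqrt c • s) := by
    rw [star_smul, star_trivial, h2, smul_mul_smul_comm, Real.mul_self_sqrt hc, ← h1]
  rw [this]; exact star_mul_self_nonneg _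

theorem lh_smul_le_smul (c : ℝ) (hc : 0 ≤ c) {x y : H →L[ℂ] H} (hxy : x ≤ y) :
    c • x ≤ c • y := by
  rw [← sub_nonneg, ← smul_sub]
  exact lh_smul_nonneg c hc (sub_nonneg.mpr hxy)

theorem lh_res (a : H →L[ℂ] H) (l : ℝ) (hl : 0 < l) (ha : 0 ≤ a) :
    cfc (fun t : ℝ => (t + l)⁻¹) a * (a + l • 1) = 1 ∧
    (a + l • 1) * cfc (fun t : ℝ => (t + l)⁻¹) a = 1 := by
  have hsa : IsSelfAdjoint a := .of_nonneg ha
  have h0 : ∀ t ∈ spectrum ℝ a, t + l ≠ 0 := fun t ht => by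
    have := spectrum_nonneg_of_nonneg ha ht; positivity
  have hc : ContinuousOn (fun t : ℝ => (t + l)⁻¹) (spectrum ℝ a) :=
    ContinuousOn.inv₀ (by fun_prop) h0
  have h1 : cfc (fun x : ℝ => x + l) a = a + l • 1 := by
    rw [cfc_add (R := ℝ) a _ _, cfc_id' ℝ a, cfc_const l a, Algebra.algebraMap_eq_smul_one]
  constructor
  · rw [← h1, ← cfc_mul _ _ a hc (by fun_prop)]
    calc cfc (fun t : ℝ => (t + l)⁻¹ * (t + l)) a = cfc (fun _ : ℝ => (1:ℝ)) a :=
          cfc_congr (fun t ht => inv_mul_cancel₀ (h0 t ht))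
      _ = 1 := cfc_one ℝ a
  · rw [← h1, ← cfc_mul _ _ a (by fun_prop) hc]
    calc cfc (fun t : ℝ => (t + l) * (t + l)⁻¹) a = cfc (fun _ : ℝ => (1:ℝ)) a :=
          cfc_congr (fun t ht => mul_inv_cancel₀ (h0 t ht))
      _ = 1 := cfc_one ℝ a

/-- The unit `a + l • 1` for `a ≥ 0` and `l > 0`. -/
noncomputable def lhUnit (a : H →L[ℂ] H) (l : ℝ) (hl : 0 < l) (ha : 0 ≤ a) : (H →L[ℂ] H)ˣ where
  val := a + l • 1
  inv := cfc (fun t : ℝ => (t + l)⁻¹) a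
  val_inv := (lh_res a l hl ha).2
  inv_val := (lh_res a l hl ha).1

theorem lh_g_eq (a : H →L[ℂ] H) (l : ℝ) (hl : 0 < l) (ha : 0 ≤ a) :
    cfc (fun t : ℝ => t / (t + l)) a = 1 - l • cfc (fun t : ℝ => (t + l)⁻¹) a := by
  have hsa : IsSelfAdjoint a := .of_nonneg ha
  have h0 : ∀ t ∈ spectrum ℝ a, t + l ≠ 0 := fun t ht => by
    have := spectrum_nonneg_of_nonneg ha ht; positivity
  have hc : ContinuousOn (fun t : ℝ => (t + l)⁻¹) (spectrum ℝ a) :=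
    ContinuousOn.inv₀ (by fun_prop) h0
  have heq : cfc (fun t : ℝ => t / (t + l)) a = cfc (fun t : ℝ => 1 - l * (t + l)⁻¹) a := by
    refine cfc_congr fun t ht => ?_
    have hne := h0 t ht
    field_simp
    ring
  rw [heq, cfc_sub (fun _ : ℝ => (1:ℝ)) (fun t : ℝ => l * (t + l)⁻¹) a (by fun_prop) (ContinuousOn.mul (by fun_prop) hc),
    cfc_const_mul l _ a hc, cfc_const_one ℝ a]

/-- Operator monotonicity of `t ↦ t / (t + l)`. -/
theorem lh_g_mono (a b : H →L[ℂ] H) (l : ℝ) (hl : 0 < l) (ha : 0 ≤ a) (hb : 0 ≤ b)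
    (hab : a ≤ b) :
    cfc (fun t : ℝ => t / (t + l)) a ≤ cfc (fun t : ℝ => t / (t + l)) b := by
  have hone : (0:H →L[ℂ] H) ≤ l • 1 := lh_smul_nonneg l hl.le zero_le_one
  have hua : (0:H →L[ℂ] H) ≤ (lhUnit a l hl ha : (H →L[ℂ] H)) := add_nonneg ha hone
  have hle : ((lhUnit a l hl ha : (H →L[ℂ] H))) ≤ (lhUnit b l hl hb : (H →L[ℂ] H)) := by
    show a + l • 1 ≤ b + l • 1
    exact add_le_add_left hab _
  have hinv := CStarAlgebra.inv_le_inv (A := H →L[ℂ] H) hua hle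
  have hinva : ((lhUnit a l hl ha)⁻¹ : (H →L[ℂ] H)ˣ) = (cfc (fun t : ℝ => (t + l)⁻¹) a : H →L[ℂ] H) := rfl
  have hinvb : ((lhUnit b l hl hb)⁻¹ : (H →L[ℂ] H)ˣ) = (cfc (fun t : ℝ => (t + l)⁻¹) b : H →L[ℂ] H) := rfl
  rw [hinva, hinvb] at hinv
  rw [lh_g_eq a l hl ha, lh_g_eq b l hl hb]
  exact sub_le_sub_left (lh_smul_le_smul l hl.le hinv) 1

theorem lh_rpow_eq (a : H →L[ℂ] H) (α : ℝ) (ha : 0 ≤ a) :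
    a ^ α = cfc (fun t : ℝ => t ^ α) a := by
  rw [CFC.rpow_def, cfc_nnreal_eq_real _ a ha]
  refine cfc_congr fun t ht => ?_
  have ht0 : 0 ≤ t := spectrum_nonneg_of_nonneg ha ht
  simp [NNReal.coe_rpow, Real.coe_toNNReal t ht0]

theorem lh_integral_nonneg {X : Type*} [MeasurableSpace X] {μ : Measure X}
    {h : X → H →L[ℂ] H} (hint : Integrable h μ) (hpos : ∀ x, 0 ≤ h x) :
    0 ≤ ∫ x, h x ∂μ := by
  rw [ContinuousLinearMap.nonneg_iff_isPositive]
  have hsa : ∀ x, (h x).IsPositive := fun x =>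
    (ContinuousLinearMap.nonneg_iff_isPositive (h x)).mp (hpos x)
  constructor
  · have hstar : star (∫ x, h x ∂μ) = ∫ x, star (h x) ∂μ := by
      have := (starL' ℝ (A := H →L[ℂ] H)).toContinuousLinearMap.integral_comp_comm hint
      simpa using this.symm
    rw [← ContinuousLinearMap.isSelfAdjoint_iff_isSymmetric, isSelfAdjoint_iff, hstar]
    exact integral_congr_ae (.of_forall fun x => (hsa x).isSelfAdjoint)
  · intro v
    set φ : (H →L[ℂ] H) →L[ℝ] ℝ :=
      (RCLike.reCLM.comp ((innerSL ℂ v).restrictScalars ℝ)).comp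
        ((ContinuousLinearMap.apply ℂ H v).restrictScalars ℝ) with hφ
    have φdef : ∀ T : H →L[ℂ] H, φ T = RCLike.re ⟪v, T v⟫_ℂ := fun T => rfl
    have hcomm : φ (∫ x, h x ∂μ) = ∫ x, φ (h x) ∂μ := (φ.integral_comp_comm hint).symm
    have hre : (∫ x, h x ∂μ).reApplyInnerSelf v = φ (∫ x, h x ∂μ) := by
      rw [φdef, ContinuousLinearMap.reApplyInnerSelf_apply]
      exact inner_re_symm ..
    rw [hre, hcomm]
    refine integral_nonneg fun x => ?_
    rw [φdef]
    have h2 := (hsa x).2 v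
    rw [ContinuousLinearMap.reApplyInnerSelf_apply] at h2
    rw [show RCLike.re ⟪v, (h x) v⟫_ℂ = RCLike.re ⟪(h x) v, v⟫_ℂ from inner_re_symm ..]
    exact h2

theorem lh_integral_mono {X : Type*} [MeasurableSpace X] {μ : Measure X}
    {f g : X → H →L[ℂ] H} (hf : Integrable f μ) (hg : Integrable g μ)
    (h : ∀ x, f x ≤ g x) : ∫ x, f x ∂μ ≤ ∫ x, g x ∂μ := by
  rw [← sub_nonneg, ← integral_sub hg hf]
  exact lh_integral_nonneg (hg.sub hf) fun x => sub_nonneg.mpr (h x)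


section Formula
variable [Nontrivial H]

theorem lh_formula (a : H →L[ℂ] H) (ha : 0 ≤ a) {α : ℝ} (h0 : 0 < α) (h1 : α < 1) :
    Integrable (fun x : ↥(Ioi (0:ℝ)) => cfc (fun t : ℝ => (x:ℝ) ^ (α-1) * (t / (t + (x:ℝ)))) a)
      ((volume : Measure ℝ).comap Subtype.val) ∧
    lhI α • a ^ α = ∫ x : ↥(Ioi (0:ℝ)),
      cfc (fun t : ℝ => (x:ℝ) ^ (α-1) * (t / (t + (x:ℝ)))) a
        ∂((volume : Measure ℝ).comap Subtype.val) := by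
  have hsa : IsSelfAdjoint a := .of_nonneg ha
  set μX : Measure ↥(Ioi (0:ℝ)) := (volume : Measure ℝ).comap Subtype.val with hμX
  set F : ↥(Ioi (0:ℝ)) → ℝ → ℝ := fun x t => (x:ℝ) ^ (α-1) * (t / (t + (x:ℝ))) with hF
  have hspec : ∀ t ∈ spectrum ℝ a, 0 ≤ t := fun t ht => spectrum_nonneg_of_nonneg ha ht
  have hspecM : ∀ t ∈ spectrum ℝ a, t ≤ ‖a‖ := fun t ht =>
    (le_abs_self t).trans (spectrum.norm_le_norm_of_mem ht)
  have hne : ∀ (x : ↥(Ioi (0:ℝ))), ∀ t ∈ spectrum ℝ a, t + (x:ℝ) ≠ 0 := by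
    intro x t ht
    have h1 := hspec t ht
    have h2 : (0:ℝ) < x := x.2
    positivity
  have hf₁ : ∀ x : ↥(Ioi (0:ℝ)), ContinuousOn (F x) (spectrum ℝ a) := by
    intro x
    exact continuousOn_const.mul (continuousOn_id.div
      (continuousOn_id.add continuousOn_const) (hne x))
  -- uncurried continuity
  have hf : Continuous (fun x : ↥(Ioi (0:ℝ)) => (spectrum ℝ a).restrict (F x)).uncurry := by
    have c1 : Continuous fun p : ↥(Ioi (0:ℝ)) × (spectrum ℝ a) => ((p.1 : ℝ)) :=
      continuous_subtype_val.comp continuous_fst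
    have c2 : Continuous fun p : ↥(Ioi (0:ℝ)) × (spectrum ℝ a) => ((p.2 : ℝ)) :=
      continuous_subtype_val.comp continuous_snd
    have cb : Continuous fun p : ↥(Ioi (0:ℝ)) × (spectrum ℝ a) => ((p.1 : ℝ)) ^ (α - 1) :=
      c1.rpow_const fun p => Or.inl (ne_of_gt p.1.2)
    exact cb.mul (c2.div (c2.add c1) fun p => hne p.1 p.2 p.2.2)
  -- the bound
  set bd : ↥(Ioi (0:ℝ)) → ℝ := fun x => (x:ℝ) ^ (α-1) * min 1 (‖a‖ / (x:ℝ)) with hbd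
  have hbound : ∀ x : ↥(Ioi (0:ℝ)), ∀ z ∈ spectrum ℝ a, ‖F x z‖ ≤ ‖bd x‖ := by
    intro x z hz
    have hx0 : (0:ℝ) < x := x.2
    have hz0 := hspec z hz
    have hzM := hspecM z hz
    have hq0 : 0 ≤ z / (z + (x:ℝ)) := by positivity
    have hq1 : z / (z + (x:ℝ)) ≤ min 1 (‖a‖ / (x:ℝ)) := by
      refine le_min ?_ ?_
      · rw [div_le_one (by positivity)]; linarith
      · calc z / (z + (x:ℝ)) ≤ z / (x:ℝ) := by gcongr; linarith
          _ ≤ ‖a‖ / (x:ℝ) := by gcongr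
    have h1 : ‖F x z‖ = (x:ℝ) ^ (α-1) * (z / (z + (x:ℝ))) := by
      rw [Real.norm_eq_abs, abs_of_nonneg (by positivity)]
    rw [h1]
    refine le_trans ?_ (le_abs_self (bd x))
    rw [hbd]
    have : (0:ℝ) ≤ (x:ℝ) ^ (α-1) := rpow_nonneg hx0.le _
    exact mul_le_mul_of_nonneg_left hq1 this
  -- finite integral of the bound
  have hemb : MeasurableEmbedding (Subtype.val : ↥(Ioi (0:ℝ)) → ℝ) :=
    MeasurableEmbedding.subtype_coe measurableSet_Ioi
  have hbdR : IntegrableOn (fun l : ℝ => l ^ (α-1) * min 1 (‖a‖ / l)) (Ioi (0:ℝ)) := by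
    have hmeas : AEStronglyMeasurable (fun l : ℝ => l ^ (α-1) * min 1 (‖a‖ / l))
        (volume.restrict (Ioi (0:ℝ))) := by
      apply ContinuousOn.aestronglyMeasurable _ measurableSet_Ioi
      intro x hx
      have hx0 : 0 < x := hx
      exact (continuousAt_rpow_const x _ (Or.inl hx0.ne')).continuousWithinAt.mul
        (continuousWithinAt_const.min (continuousWithinAt_const.div
          continuousWithinAt_id hx0.ne'))
    rw [← Ioc_union_Ioi_eq_Ioi (zero_le_one)]
    apply IntegrableOn.union
    · have hint : IntegrableOn (fun l : ℝ => l ^ (α - 1)) (Ioc (0:ℝ) 1) := by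
        rw [← intervalIntegrable_iff_integrableOn_Ioc_of_le zero_le_one]
        apply intervalIntegral.intervalIntegrable_rpow'
        linarith
      refine hint.mono' (hmeas.mono_measure
        (Measure.restrict_mono Ioc_subset_Ioi_self le_rfl)) ?_
      filter_upwards [ae_restrict_mem measurableSet_Ioc] with x hx
      have hx0 : 0 < x := hx.1
      have hmin0 : 0 ≤ min 1 (‖a‖ / x) := le_min zero_le_one (by positivity)
      rw [Real.norm_eq_abs, abs_mul, abs_of_nonneg (rpow_nonneg hx0.le _), abs_of_nonneg hmin0]
      calc x ^ (α-1) * min 1 (‖a‖ / x) ≤ x ^ (α-1) * 1 := by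
            gcongr; exact min_le_left _ _
        _ = x ^ (α-1) := mul_one _
    · have hint : IntegrableOn (fun l : ℝ => ‖a‖ * l ^ (α - 2)) (Ioi (1:ℝ)) :=
        (integrableOn_Ioi_rpow_of_lt (by linarith) one_pos).const_mul ‖a‖
      refine hint.mono' (hmeas.mono_measure
        (Measure.restrict_mono (Ioi_subset_Ioi zero_le_one) le_rfl)) ?_
      filter_upwards [ae_restrict_mem measurableSet_Ioi] with x hx
      have hx1 : 1 < x := hx
      have hx0 : 0 < x := by linarith
      have hmin0 : 0 ≤ min 1 (‖a‖ / x) := le_min zero_le_one (by positivity)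
      rw [Real.norm_eq_abs, abs_mul, abs_of_nonneg (rpow_nonneg hx0.le _), abs_of_nonneg hmin0]
      calc x ^ (α-1) * min 1 (‖a‖ / x) ≤ x ^ (α-1) * (‖a‖ / x) := by
            gcongr; exact min_le_right _ _
        _ = ‖a‖ * (x ^ (α-1) / x) := by ring
        _ = ‖a‖ * x ^ (α-2) := by
            rw [← Real.rpow_sub_one hx0.ne']; ring_nf
  have hbd_int : Integrable bd μX := by
    have : Integrable ((fun l : ℝ => l ^ (α-1) * min 1 (‖a‖ / l)) ∘ Subtype.val) μX := by
      rw [← hemb.integrable_map_iff, hμX, map_comap_subtype_coe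
        measurableSet_Ioi]
      exact hbdR
    exact this
  have hfin : HasFiniteIntegral bd μX := hbd_int.2
  -- the continuous-map valued function and its integrability
  have hf₂ : Continuous (fun x : ↥(Ioi (0:ℝ)) =>
      (⟨_, (hf₁ x).restrict⟩ : C(spectrum ℝ a, ℝ))) :=
    ContinuousMap.curry ⟨_, hf⟩ |>.continuous
  have fc_int : Integrable (fun x : ↥(Ioi (0:ℝ)) =>
      (⟨_, (hf₁ x).restrict⟩ : C(spectrum ℝ a, ℝ))) μX := by
    refine ⟨hf₂.aestronglyMeasurable, ?_⟩
    refine hfin.mono <| .of_forall fun x => ?_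
    rw [ContinuousMap.norm_le _ (norm_nonneg (bd x))]
    exact fun z => hbound x z.1 z.2
  have hint : Integrable (fun x : ↥(Ioi (0:ℝ)) => cfc (F x) a) μX := by
    have h := (cfcL (R := ℝ) hsa).integrable_comp fc_int
    refine h.congr ?_
    exact .of_forall fun x => (cfc_eq_cfcL hsa (hf₁ x)).symm
  refine ⟨hint, ?_⟩
  have heq := cfc_integral' (μ := μX) F a (.of_forall hf₁)
    (fc_int.congr (.of_forall fun x => (ContinuousMap.mkD_of_continuousOn (hf₁ x)).symm)) hsa
  rw [← heq]
  -- identify the left side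
  have hlhs : cfc (fun r : ℝ => ∫ x, F x r ∂μX) a = lhI α • a ^ α := by
    have hcongr : ∀ r ∈ spectrum ℝ a, (∫ x, F x r ∂μX) = lhI α * r ^ α := by
      intro r hr
      have : (∫ x, F x r ∂μX)
          = ∫ l in Ioi (0:ℝ), l ^ (α-1) * (r / (r + l)) := by
        rw [hμX]
        exact integral_subtype_comap measurableSet_Ioi fun l => l ^ (α-1) * (r / (r + l))
      rw [this]
      exact lh_scalar h0 r (hspec r hr)
    have hcont : ContinuousOn (fun r : ℝ => r ^ α) (spectrum ℝ a) := by
      apply Continuous.continuousOn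
      rw [continuous_iff_continuousAt]
      intro t
      rcases eq_or_ne t 0 with rfl | ht
      · exact Real.continuousAt_rpow_const _ _ (Or.inr h0.le)
      · exact Real.continuousAt_rpow_const _ _ (Or.inl ht)
    rw [cfc_congr hcongr, cfc_const_mul (lhI α) _ a hcont, ← lh_rpow_eq a α ha]
  rw [hlhs]

end Formula

end LoewnerHeinzAux

open LoewnerHeinzAux in
/-- Löwner–Heinz inequality: if `A` and `B` are positive bounded operators on a
complex Hilbert space with `A ≤ B` in the Loewner order, then `A ^ α ≤ B ^ α` for all
`0 ≤ α ≤ 1`, where powers are taken via the continuous functional calculus. -/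
theorem loewner_heinz {H : Type*} [NormedAddCommGroup H] [InnerProductSpace ℂ H]
    [CompleteSpace H] (A B : H →L[ℂ] H) (hA : 0 ≤ A) (hB : 0 ≤ B) (hAB : A ≤ B)
    (α : ℝ) (hα0 : 0 ≤ α) (hα1 : α ≤ 1) :
    A ^ α ≤ B ^ α := by
  rcases subsingleton_or_nontrivial H with hH | hH
  · have : Subsingleton (H →L[ℂ] H) :=
      ⟨fun f g => ContinuousLinearMap.ext fun x => Subsingleton.elim _ _⟩
    exact le_of_eq (Subsingleton.elim _ _)
  rcases eq_or_lt_of_le hα0 with rfl | h0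
  · rw [CFC.rpow_zero A hA, CFC.rpow_zero B hB]
  rcases eq_or_lt_of_le hα1 with rfl | h1
  · rw [CFC.rpow_one A hA, CFC.rpow_one B hB]
    exact hAB
  have hfA := lh_formula A hA h0 h1
  have hfB := lh_formula B hB h0 h1
  have hptwise : ∀ x : ↥(Set.Ioi (0:ℝ)),
      cfc (fun t : ℝ => (x:ℝ) ^ (α-1) * (t / (t + (x:ℝ)))) A
        ≤ cfc (fun t : ℝ => (x:ℝ) ^ (α-1) * (t / (t + (x:ℝ)))) B := by
    intro x
    have hx0 : (0:ℝ) < x := x.2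
    have hcA : ContinuousOn (fun t : ℝ => t / (t + (x:ℝ))) (spectrum ℝ A) := by
      refine continuousOn_id.div (continuousOn_id.add continuousOn_const) fun t ht => ?_
      have := spectrum_nonneg_of_nonneg hA ht; positivity
    have hcB : ContinuousOn (fun t : ℝ => t / (t + (x:ℝ))) (spectrum ℝ B) := by
      refine continuousOn_id.div (continuousOn_id.add continuousOn_const) fun t ht => ?_
      have := spectrum_nonneg_of_nonneg hB ht; positivity
    rw [cfc_const_mul ((x:ℝ) ^ (α-1)) _ A hcA, cfc_const_mul ((x:ℝ) ^ (α-1)) _ B hcB]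
    exact lh_smul_le_smul _ (Real.rpow_nonneg hx0.le _)
      (lh_g_mono A B (x:ℝ) hx0 hA hB hAB)
  have key : lhI α • A ^ α ≤ lhI α • B ^ α := by
    rw [hfA.2, hfB.2]
    exact lh_integral_mono hfA.1 hfB.1 hptwise
  have hI : 0 < lhI α := lhI_pos h0 h1
  have h2 := lh_smul_le_smul (lhI α)⁻¹ (by positivity) key
  rwa [smul_smul, smul_smul, inv_mul_cancel₀ hI.ne', one_smul, one_smul] at h2
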